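/- Let G be a k-vertex-critical graph and let U, W be non-empty disjoint vertex subsets of G. Let H be the (k−1)-hull of G − U, i.e., the graph on V(G) \ U where two vertices are adjacent iff they receive different colors in every (k−1)-coloring of G − U. If φ is a graph homomorphism from the subgraph of G induced by U to the subgraph of H induced by W, then there exists a vertex u ∈ U with N_G(u) \ U ⊄ N_H(φ(u)). -/

import Mathlib

open SimpleGraph

/-- A graph is `k`-vertex-critical if it is `k`-colorable, not `(k-1)`-colorable, and every
proper induced subgraph is `(k-1)`-colorable. -/
def IsKVertexCritical {V : Type*} (G : SimpleGraph V) (k : ℕ) : Prop :=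
  G.Colorable k ∧ ¬ G.Colorable (k - 1) ∧
    ∀ s : Set V, s ≠ Set.univ → (G.induce s).Colorable (k - 1)

/-- The `k`-hull of a graph `G`: distinct vertices `u`, `v` are adjacent iff `u` and `v`
receive different colors in every `k`-coloring of `G`. -/
def kHull {V : Type*} (G : SimpleGraph V) (k : ℕ) : SimpleGraph V where
  Adj u v := u ≠ v ∧ ∀ c : G.Coloring (Fin k), c u ≠ c v
  symm := by
    constructor
    intro u v ⟨h1, h2⟩
    exact ⟨h1.symm, fun c => (h2 c).symm⟩
  loopless := by constructor; intro u ⟨h1, _⟩; exact h1 rfl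

theorem vertexCritical_homomorphism_trick {V : Type*} (G : SimpleGraph V) (k : ℕ)
    (h : IsKVertexCritical G k) (U W : Set V)
    (hUne : U.Nonempty) (hWne : W.Nonempty) (hdisj : Disjoint U W)
    (φ : (G.induce U) →g ((kHull (G.induce Uᶜ) (k - 1)).induce {x : ↥Uᶜ | ↑x ∈ W})) :
    ∃ (u : V) (hu : u ∈ U), ∃ (x : V) (hx : x ∉ U), G.Adj u x ∧
      ¬ (kHull (G.induce Uᶜ) (k - 1)).Adj (φ ⟨u, hu⟩ : ↥Uᶜ) ⟨x, hx⟩ := by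
  by_contra hcon
  push_neg at hcon
  -- Uᶜ ≠ univ since U is nonempty
  obtain ⟨u0, hu0⟩ := hUne
  have hne : (Uᶜ : Set V) ≠ Set.univ := by
    intro heq
    have : u0 ∈ (Uᶜ : Set V) := heq ▸ Set.mem_univ u0
    exact this hu0
  obtain ⟨c⟩ := h.2.2 Uᶜ hne
  -- build a (k-1)-coloring of G
  classical
  refine h.2.1 ⟨Coloring.mk
    (fun v => if hv : v ∈ U then c (φ ⟨v, hv⟩ : ↥Uᶜ) else c ⟨v, hv⟩) ?_⟩
  intro a b hab
  have hne' : a ≠ b := hab.ne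
  by_cases ha : a ∈ U <;> by_cases hb : b ∈ U <;> simp only [ha, hb, dif_pos, dif_neg,
    not_false_iff]
  · -- both in U: use φ and hull adjacency
    have hadj : (G.induce U).Adj ⟨a, ha⟩ ⟨b, hb⟩ := hab
    have := φ.map_rel hadj
    exact this.2 c
  · -- a ∈ U, b ∉ U
    have := hcon a ha b hb hab
    exact this.2 c
  · -- a ∉ U, b ∈ U
    have := hcon b hb a ha hab.symm
    exact fun e => this.2 c e.symm
  · -- both outside U
    exact c.valid (show (G.induce Uᶜ).Adj ⟨a, ha⟩ ⟨b, hb⟩ from hab)
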